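/- Under the hypotheses of the previous statement, k(δ) = √|log δ| + ((2n−1)/4)·(log |log δ|)/√|log δ| + o((log |log δ|)/√|log δ|) as δ → 0⁺. -/

import Mathlib

open Filter Real Topology

set_option maxHeartbeats 1000000 in
/-- `k(δ) = √|log δ| + ((2n-1)/4) (log |log δ|)/√|log δ| + o((log |log δ|)/√|log δ|)`
as `δ → 0⁺`, for the inverse band function `k(δ)` defined by `f (k δ) = E + δ`. -/
theorem stmt5 (f : ℝ → ℝ) (E C : ℝ) (hC : 0 < C) (n : ℕ) (hn : 1 ≤ n)
    (r : ℝ → ℝ) (hr : Asymptotics.IsBigO Filter.atTop r (fun k : ℝ => k⁻¹ ^ 2))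
    (hform : ∀ᶠ k in Filter.atTop,
      f k = E + C * k ^ (2 * n - 1) * Real.exp (-k ^ 2) * (1 + r k))
    (hcont : Continuous f) (hanti : StrictAnti f)
    (htop : Filter.Tendsto f Filter.atTop (nhds E))
    (k : ℝ → ℝ) (hk : ∀ᶠ δ in nhdsWithin 0 (Set.Ioi 0), f (k δ) = E + δ) :
    Filter.Tendsto
      (fun δ =>
        (k δ - (Real.sqrt |Real.log δ| +
          ((2 * (n : ℝ) - 1) / 4) * Real.log |Real.log δ| / Real.sqrt |Real.log δ|)) /
        (Real.log |Real.log δ| / Real.sqrt |Real.log δ|))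
      (nhdsWithin 0 (Set.Ioi 0)) (nhds 0) := by
  have hr0 : Tendsto r atTop (𝓝 0) := by
    refine hr.trans_tendsto ?_
    have h1 : Tendsto (fun x : ℝ => x⁻¹) atTop (𝓝 (0:ℝ)) := tendsto_inv_atTop_zero
    have := h1.pow 2
    simpa using this
  set l := nhdsWithin (0:ℝ) (Set.Ioi 0) with hl
  set L : ℝ → ℝ := fun δ => |Real.log δ| with hLdef
  set S : ℝ → ℝ := fun δ => Real.sqrt (L δ) with hSdef
  set u : ℝ → ℝ := fun δ => Real.log (L δ) / S δ with hudef
  have hL : Tendsto L l atTop :=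
    tendsto_abs_atBot_atTop.comp Real.tendsto_log_nhdsGT_zero
  have hsqrtTop : Tendsto Real.sqrt atTop atTop := by
    refine (tendsto_rpow_atTop (by norm_num : (0:ℝ) < 1/2)).congr' ?_
    filter_upwards [eventually_ge_atTop (0:ℝ)] with x hx
    rw [← Real.sqrt_eq_rpow]
  have hS : Tendsto S l atTop := hsqrtTop.comp hL
  have hu : Tendsto u l (𝓝 0) := by
    have h1 : Tendsto (fun x : ℝ => Real.log x / Real.sqrt x) atTop (𝓝 0) := by
      refine ((isLittleO_log_rpow_atTop (by norm_num : (0:ℝ) < 1/2)).tendsto_div_nhds_zero).congr' ?_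
      filter_upwards [eventually_ge_atTop (0:ℝ)] with x hx
      rw [← Real.sqrt_eq_rpow]
    exact h1.comp hL
  have hlogL : Tendsto (fun δ => Real.log (L δ)) l atTop := Real.tendsto_log_atTop.comp hL
  -- k δ → ∞
  have hk_top : Tendsto k l atTop := by
    rw [tendsto_atTop]
    intro M
    have hEM : E < f M := by
      have h1 : E ≤ f (M + 1) := by
        refine le_of_tendsto htop ?_
        filter_upwards [eventually_ge_atTop (M + 1)] with x hx
        exact hanti.antitone hx
      exact h1.trans_lt (hanti (lt_add_one M))
    have hev : ∀ᶠ δ in l, δ < f M - E :=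
      Filter.Eventually.filter_mono nhdsWithin_le_nhds
        (eventually_lt_nhds (by linarith : (0:ℝ) < f M - E))
    filter_upwards [hev, hk] with δ hδ hkδ
    by_contra hle
    push_neg at hle
    have : f M ≤ f (k δ) := hanti.antitone hle.le
    rw [hkδ] at this
    linarith
  -- the key eventual package, for any coefficient a > 0
  have main : ∀ a : ℝ, 0 < a → (∀ᶠ δ in l,
      0 < δ ∧
      0 < u δ ∧
      0 < f (S δ + a * u δ) - E ∧
      Real.log (f (S δ + a * u δ) - E) - Real.log δ
        = Real.log C + (2 * (n:ℝ) - 1) * Real.log (S δ + a * u δ)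
          + Real.log (1 + r (S δ + a * u δ))
          - 2 * a * Real.log (L δ) - a ^ 2 * (u δ) ^ 2 ∧
      Real.log (1 + r (S δ + a * u δ)) ≤ 1 ∧
      -1 ≤ Real.log (1 + r (S δ + a * u δ)) ∧
      (1/2) * Real.log (L δ) ≤ Real.log (S δ + a * u δ) ∧
      Real.log (S δ + a * u δ) ≤ 1 + (1/2) * Real.log (L δ) ∧
      a ^ 2 * (u δ) ^ 2 ≤ 1 ∧
      f (k δ) = E + δ) := by
    intro a ha
    have hg : Tendsto (fun δ => S δ + a * u δ) l atTop := by
      refine tendsto_atTop_add_right_of_le' l (-1) hS ?_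
      have hau : Tendsto (fun δ => a * u δ) l (𝓝 0) := by
        simpa using hu.const_mul a
      filter_upwards [hau.eventually (eventually_ge_nhds (by norm_num : (-1:ℝ) < 0))] with δ h
      exact h
    have hrg : Tendsto (fun δ => r (S δ + a * u δ)) l (𝓝 0) := hr0.comp hg
    have hrg_half : ∀ᶠ δ in l, |r (S δ + a * u δ)| ≤ 1/2 := by
      have habs : Tendsto (fun δ => |r (S δ + a * u δ)|) l (𝓝 0) := by
        simpa using hrg.abs
      exact habs.eventually (eventually_le_nhds (by norm_num : (0:ℝ) < 1/2))
    have hau1 : ∀ᶠ δ in l, a * u δ ≤ 1 := by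
      have hau : Tendsto (fun δ => a * u δ) l (𝓝 0) := by
        simpa using hu.const_mul a
      exact hau.eventually (eventually_le_nhds (by norm_num : (0:ℝ) < 1))
    have hau2 : ∀ᶠ δ in l, a ^ 2 * (u δ) ^ 2 ≤ 1 := by
      have h2 : Tendsto (fun δ => a ^ 2 * (u δ) ^ 2) l (𝓝 0) := by
        have := (hu.mul hu).const_mul (a ^ 2)
        simpa [sq] using this
      exact h2.eventually (eventually_le_nhds (by norm_num : (0:ℝ) < 1))
    have hδ1 : ∀ᶠ δ in l, δ < 1 :=
      Filter.Eventually.filter_mono nhdsWithin_le_nhds (eventually_lt_nhds (by norm_num : (0:ℝ) < 1))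
    have hδ0 : ∀ᶠ δ in l, (0:ℝ) < δ := by
      filter_upwards [self_mem_nhdsWithin] with δ hδ
      exact hδ
    have hL3 : ∀ᶠ δ in l, 3 ≤ L δ := hL.eventually_ge_atTop 3
    filter_upwards [hδ0, hδ1, hL3, hg.eventually hform, hrg_half, hau1, hau2, hk]
      with δ h0 h1 h3 hf2 hhalf hau1' hau2' hkδ
    have hLpos : (0:ℝ) < L δ := by linarith
    have hlogLpos : 0 < Real.log (L δ) := Real.log_pos (by linarith)
    have hSpos : 0 < S δ := Real.sqrt_pos.2 hLpos
    have hS1 : 1 ≤ S δ := Real.one_le_sqrt.2 (by linarith)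
    have hupos : 0 < u δ := div_pos hlogLpos hSpos
    have haupos : 0 < a * u δ := mul_pos ha hupos
    set g := S δ + a * u δ with hgdef
    have hgpos : 0 < g := by positivity
    have hrbd := abs_le.1 hhalf
    have h1r_lo : (1/2:ℝ) ≤ 1 + r g := by linarith [hrbd.1]
    have h1r_hi : 1 + r g ≤ 3/2 := by linarith [hrbd.2]
    have h1rpos : 0 < 1 + r g := by linarith
    -- the value of f at g
    have hfg : f g - E = C * g ^ (2 * n - 1) * Real.exp (-g ^ 2) * (1 + r g) := by
      rw [hf2]; ring
    have hfgpos : 0 < f g - E := by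
      rw [hfg]
      positivity
    have hlogδ : Real.log δ = -(L δ) := by
      have : Real.log δ < 0 := Real.log_neg h0 h1
      simp only [hLdef]
      rw [abs_of_neg this]; ring
    have hSu : S δ * u δ = Real.log (L δ) := by
      simp only [hudef]
      field_simp
    have hSsq : S δ ^ 2 = L δ := Real.sq_sqrt hLpos.le
    have hgsq : g ^ 2 = L δ + 2 * a * Real.log (L δ) + a ^ 2 * (u δ) ^ 2 := by
      have : g ^ 2 = S δ ^ 2 + 2 * a * (S δ * u δ) + a ^ 2 * (u δ) ^ 2 := by
        simp only [hgdef]; ring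
      rw [this, hSu, hSsq]
    have hcast : ((2 * n - 1 : ℕ) : ℝ) = 2 * (n:ℝ) - 1 := by
      have h21 : (1:ℕ) ≤ 2 * n := by omega
      push_cast [Nat.cast_sub h21]
      ring
    have hlogfg : Real.log (f g - E) - Real.log δ
        = Real.log C + (2 * (n:ℝ) - 1) * Real.log g + Real.log (1 + r g)
          - 2 * a * Real.log (L δ) - a ^ 2 * (u δ) ^ 2 := by
      rw [hfg, Real.log_mul (by positivity) (ne_of_gt h1rpos),
        Real.log_mul (by positivity) (Real.exp_ne_zero _),
        Real.log_mul (ne_of_gt hC) (by positivity),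
        Real.log_pow, Real.log_exp, hcast, hgsq, hlogδ]
      ring
    -- log bounds for 1 + r g
    have hlog1r_hi : Real.log (1 + r g) ≤ 1 := by
      have := Real.log_le_sub_one_of_pos h1rpos
      linarith
    have hlog1r_lo : -1 ≤ Real.log (1 + r g) := by
      have hinvpos : 0 < (1 + r g)⁻¹ := by positivity
      have h2 := Real.log_le_sub_one_of_pos hinvpos
      rw [Real.log_inv] at h2
      have hinv2 : (1 + r g)⁻¹ ≤ 2 := by
        rw [← one_div]
        rw [div_le_iff₀ h1rpos]
        linarith
      linarith
    -- log bounds for g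
    have hlogS : Real.log (S δ) = Real.log (L δ) / 2 := Real.log_sqrt hLpos.le
    have hlogg_lo : (1/2) * Real.log (L δ) ≤ Real.log g := by
      have : Real.log (S δ) ≤ Real.log g :=
        Real.log_le_log hSpos (by simp only [hgdef]; linarith)
      rw [hlogS] at this
      linarith
    have hlogg_hi : Real.log g ≤ 1 + (1/2) * Real.log (L δ) := by
      have hg2S : g ≤ 2 * S δ := by
        simp only [hgdef]; linarith
      have h2 : Real.log g ≤ Real.log (2 * S δ) := Real.log_le_log hgpos hg2S
      rw [Real.log_mul (by norm_num) (ne_of_gt hSpos), hlogS] at h2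
      have hlog2 : Real.log 2 ≤ 1 := by
        have := Real.log_le_sub_one_of_pos (by norm_num : (0:ℝ) < 2)
        linarith
      linarith
    exact ⟨h0, hupos, hfgpos, hlogfg, hlog1r_hi, hlog1r_lo, hlogg_lo, hlogg_hi, hau2', hkδ⟩
  -- now the main argument
  rw [Metric.tendsto_nhds]
  intro ε hε
  set ε' := min ε (1/16) with hε'def
  have hε'pos : 0 < ε' := lt_min hε (by norm_num)
  have hε'le : ε' ≤ ε := min_le_left _ _
  have hε'lt : ε' ≤ 1/16 := min_le_right _ _
  have hm1 : (1:ℝ) ≤ 2 * (n:ℝ) - 1 := by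
    have : (1:ℝ) ≤ (n:ℝ) := by exact_mod_cast hn
    linarith
  set c : ℝ := (2 * (n:ℝ) - 1) / 4 with hcdef
  have hcpos : (1/4:ℝ) ≤ c := by
    simp only [hcdef]; linarith
  have haplus : 0 < c + ε' := by linarith
  have haminus : 0 < c - ε' := by linarith
  have h2eps : Tendsto (fun δ => 2 * ε' * Real.log (L δ)) l atTop :=
    hlogL.const_mul_atTop (by linarith)
  clear_value l L S u c ε'
  -- upper bound: k δ < S δ + (c + ε') * u δ eventually
  have upper : ∀ᶠ δ in l, k δ < S δ + (c + ε') * u δ := by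
    have hbd : ∀ᶠ δ in l, Real.log C + (2 * (n:ℝ) - 1) + 2 < 2 * ε' * Real.log (L δ) :=
      h2eps.eventually_gt_atTop _
    filter_upwards [main (c + ε') haplus, hbd] with δ hpack hbd'
    obtain ⟨h0, hupos, hfgpos, hlogfg, hlr_hi, hlr_lo, hlg_lo, hlg_hi, hau2, hkδ⟩ := hpack
    set g := S δ + (c + ε') * u δ with hgdef
    have hmul : (2 * (n:ℝ) - 1) * Real.log g
        ≤ (2 * (n:ℝ) - 1) * (1 + (1/2) * Real.log (L δ)) :=
      mul_le_mul_of_nonneg_left hlg_hi (by linarith)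
    have hsq : 0 ≤ (c + ε') ^ 2 * (u δ) ^ 2 := by positivity
    have hΦ : Real.log (f g - E) - Real.log δ < 0 := by
      rw [hlogfg]
      have hexp : 2 * (c + ε') * Real.log (L δ)
          = (2 * (n:ℝ) - 1) * ((1/2) * Real.log (L δ)) + 2 * ε' * Real.log (L δ) := by
        rw [hcdef]; ring
      have hexp2 : (2 * (n:ℝ) - 1) * (1 + (1/2) * Real.log (L δ))
          = (2 * (n:ℝ) - 1) + (2 * (n:ℝ) - 1) * ((1/2) * Real.log (L δ)) := by ring
      linarith [hmul, hsq, hlr_hi, hbd', hexp, hexp2]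
    have hlt : f g - E < δ := by
      have h2 := Real.exp_lt_exp.2 (show Real.log (f g - E) < Real.log δ by linarith)
      rwa [Real.exp_log hfgpos, Real.exp_log h0] at h2
    have : f g < f (k δ) := by rw [hkδ]; linarith
    exact hanti.lt_iff_gt.mp this
  -- lower bound: S δ + (c - ε') * u δ < k δ eventually
  have lower : ∀ᶠ δ in l, S δ + (c - ε') * u δ < k δ := by
    have hbd : ∀ᶠ δ in l, 3 - Real.log C < 2 * ε' * Real.log (L δ) :=
      h2eps.eventually_gt_atTop _
    filter_upwards [main (c - ε') haminus, hbd] with δ hpack hbd'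
    obtain ⟨h0, hupos, hfgpos, hlogfg, hlr_hi, hlr_lo, hlg_lo, hlg_hi, hau2, hkδ⟩ := hpack
    set g := S δ + (c - ε') * u δ with hgdef
    have hmul : (2 * (n:ℝ) - 1) * ((1/2) * Real.log (L δ))
        ≤ (2 * (n:ℝ) - 1) * Real.log g :=
      mul_le_mul_of_nonneg_left hlg_lo (by linarith)
    have hΦ : 0 < Real.log (f g - E) - Real.log δ := by
      rw [hlogfg]
      have hexp : 2 * (c - ε') * Real.log (L δ)
          = (2 * (n:ℝ) - 1) * ((1/2) * Real.log (L δ)) - 2 * ε' * Real.log (L δ) := by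
        rw [hcdef]; ring
      linarith [hmul, hlr_lo, hau2, hbd', hexp]
    have hlt : δ < f g - E := by
      have h2 := Real.exp_lt_exp.2 (show Real.log δ < Real.log (f g - E) by linarith)
      rwa [Real.exp_log hfgpos, Real.exp_log h0] at h2
    have : f (k δ) < f g := by rw [hkδ]; linarith
    exact hanti.lt_iff_gt.mp this
  filter_upwards [upper, lower, (main (c + ε') haplus)] with δ hup hlow hpack
  obtain ⟨h0, hupos, -, -, -, -, -, -, -, -⟩ := hpack
  simp only [hudef, hSdef, hLdef, hcdef] at hup hlow hupos
  rw [Real.dist_eq, sub_zero, abs_div, hcdef, abs_of_pos hupos, div_lt_iff₀ hupos, abs_lt]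
  have e1 : (2 * (n:ℝ) - 1) / 4 * Real.log |Real.log δ| / Real.sqrt |Real.log δ|
      = (2 * (n:ℝ) - 1) / 4 * (Real.log |Real.log δ| / Real.sqrt |Real.log δ|) := by
    ring
  rw [e1]
  have hre : ε' * (Real.log |Real.log δ| / Real.sqrt |Real.log δ|)
      ≤ ε * (Real.log |Real.log δ| / Real.sqrt |Real.log δ|) :=
    mul_le_mul_of_nonneg_right hε'le hupos.le
  generalize hU : Real.log |Real.log δ| / Real.sqrt |Real.log δ| = U at hup hlow hre ⊢
  generalize hA : Real.sqrt |Real.log δ| = A at hup hlow ⊢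
  constructor
  · linarith [hlow, hre]
  · linarith [hup, hre]
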